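/- arXiv:2401.09287 — 2 statements merged into one kernel-verified Lean document; each statement's English description precedes it below -/
import Mathlib

section
/- Let A = (a_ij) be an n×n symmetrically reciprocal matrix with positive entries. Then its tropical spectral radius satisfies λ(A) ≥ 1, and λ(A) = 1 if and only if A is consistent, i.e. a_ij = a_ik·a_kj for all i, j, k. -/
/-- Max-times matrix product: `(A ⊗ B)_ik = max_j a_ij · b_jk`. -/
noncomputable def tMul {n : ℕ} (A B : Matrix (Fin n) (Fin n) ℝ) : Matrix (Fin n) (Fin n) ℝ :=
  fun i k => ⨆ j, A i j * B j k

/-- Max-times matrix powers, with `A^⊗0 = I`. -/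
noncomputable def tPow {n : ℕ} (A : Matrix (Fin n) (Fin n) ℝ) : ℕ → Matrix (Fin n) (Fin n) ℝ
  | 0 => fun i j => if i = j then 1 else 0
  | (k + 1) => tMul A (tPow A k)

/-- Tropical trace: `tr A = max_i a_ii`. -/
noncomputable def tTr {n : ℕ} (A : Matrix (Fin n) (Fin n) ℝ) : ℝ :=
  ⨆ i, A i i

/-- Tropical spectral radius: `λ(A) = max_{1 ≤ k ≤ n} (tr (A^⊗k))^(1/k)`. -/
noncomputable def tRadius {n : ℕ} (A : Matrix (Fin n) (Fin n) ℝ) : ℝ :=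
  ⨆ k : Fin n, (tTr (tPow A ((k : ℕ) + 1))) ^ ((1 : ℝ) / ((k : ℕ) + 1))

private lemma bddR {α : Type*} [Fintype α] (f : α → ℝ) : BddAbove (Set.range f) :=
  (Set.finite_range f).bddAbove

lemma tPow_succ_apply {n : ℕ} (A : Matrix (Fin n) (Fin n) ℝ) (m : ℕ) (i k : Fin n) :
    tPow A (m + 1) i k = ⨆ j, A i j * tPow A m j k := rfl

lemma tPow_one {n : ℕ} (A : Matrix (Fin n) (Fin n) ℝ) (hA : ∀ i j, 0 < A i j) :
    tPow A 1 = A := by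
  funext i k
  have hne : Nonempty (Fin n) := ⟨k⟩
  rw [tPow_succ_apply]
  apply le_antisymm
  · apply ciSup_le
    intro j
    by_cases h : j = k
    · subst h; simp [tPow]
    · simp [tPow, h]
      exact (hA i k).le
  · have := le_ciSup (bddR fun j => A i j * tPow A 0 j k) k
    simpa [tPow] using this

lemma tPow_succ_pos {n : ℕ} (A : Matrix (Fin n) (Fin n) ℝ) (hA : ∀ i j, 0 < A i j)
    (m : ℕ) (i k : Fin n) : 0 < tPow A (m + 1) i k := by
  induction m generalizing i k with
  | zero => rw [tPow_one A hA]; exact hA i k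
  | succ m ih =>
    rw [tPow_succ_apply]
    calc (0:ℝ) < A i k * tPow A (m+1) k k := mul_pos (hA i k) (ih k k)
      _ ≤ _ := le_ciSup (bddR fun j => A i j * tPow A (m+1) j k) k

lemma triangle_le_tPow3 {n : ℕ} (A : Matrix (Fin n) (Fin n) ℝ) (hA : ∀ i j, 0 < A i j)
    (i j k : Fin n) : A i j * A j k * A k i ≤ tPow A 3 i i := by
  have h2 : A j k * A k i ≤ tPow A 2 j i := by
    have := le_ciSup (bddR fun k' => A j k' * tPow A 1 k' i) k
    rw [tPow_one A hA] at this
    rw [tPow_succ_apply]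
    simpa [tPow_one A hA] using this
  have h3 : A i j * tPow A 2 j i ≤ tPow A 3 i i := by
    rw [show (3:ℕ) = 2 + 1 from rfl, tPow_succ_apply]
    exact le_ciSup (bddR fun j' => A i j' * tPow A 2 j' i) j
  calc A i j * A j k * A k i = A i j * (A j k * A k i) := by ring
    _ ≤ A i j * tPow A 2 j i := mul_le_mul_of_nonneg_left h2 (hA i j).le
    _ ≤ tPow A 3 i i := h3

/-- For a symmetrically reciprocal positive matrix `A`, the tropical spectral
radius satisfies `λ(A) ≥ 1`, with equality if and only if `A` is consistent,
i.e. `a_ij = a_ik · a_kj` for all `i, j, k`. -/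
theorem tRadius_ge_one_and_eq_one_iff_consistent (n : ℕ) (hn : 1 ≤ n)
    (A : Matrix (Fin n) (Fin n) ℝ) (hA : ∀ i j, 0 < A i j)
    (hrec : ∀ i j, A j i = 1 / A i j) :
    1 ≤ tRadius A ∧ (tRadius A = 1 ↔ ∀ i j k, A i j = A i k * A k j) := by
  have hne : Nonempty (Fin n) := ⟨⟨0, hn⟩⟩
  have diag_one : ∀ i, A i i = 1 := by
    intro i
    have h := hrec i i
    have hp := hA i i
    rw [eq_div_iff hp.ne'] at h
    nlinarith
  have tTrA : tTr A = 1 := by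
    have : (fun i => A i i) = fun _ : Fin n => (1:ℝ) := funext diag_one
    rw [tTr, this, ciSup_const]
  -- part 1
  have hge : 1 ≤ tRadius A := by
    have h := le_ciSup (bddR fun k : Fin n =>
      tTr (tPow A ((k:ℕ)+1)) ^ ((1:ℝ)/((k:ℕ)+1))) (⟨0, hn⟩ : Fin n)
    simp only [Fin.val_mk, Nat.cast_zero, zero_add] at h
    rw [tPow_one A hA, tTrA] at h
    exact le_trans (by norm_num) h
  refine ⟨hge, ?_, ?_⟩
  · -- tRadius = 1 → consistent
    intro hrad
    have htTr3 : tTr (tPow A 3) ≤ 1 ∨ n < 3 := by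
      by_cases h3n : 3 ≤ n
      · left
        set t := tTr (tPow A 3) with ht
        have htpos : 0 < t := by
          have := le_ciSup (bddR fun i => tPow A 3 i i) (⟨0, hn⟩ : Fin n)
          exact lt_of_lt_of_le (tPow_succ_pos A hA 2 _ _) this
        have hk : ((⟨2, by omega⟩ : Fin n) : ℕ) = 2 := rfl
        have h := le_ciSup (bddR fun k : Fin n =>
          tTr (tPow A ((k:ℕ)+1)) ^ ((1:ℝ)/((k:ℕ)+1))) (⟨2, by omega⟩ : Fin n)
        have hsup : (⨆ k : Fin n, tTr (tPow A ((k:ℕ)+1)) ^ ((1:ℝ)/((k:ℕ)+1))) = 1 := hrad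
        rw [hsup] at h
        simp only [hk] at h
        -- h : tTr (tPow A (2+1)) ^ ((1:ℝ)/(2+1)) ≤ 1
        have h' : (t ^ ((1:ℝ)/3)) ^ (3:ℝ) ≤ 1 ^ (3:ℝ) := by
          apply Real.rpow_le_rpow (Real.rpow_nonneg htpos.le _) _ (by norm_num)
          convert h using 3; rfl; norm_num
        rw [← Real.rpow_mul htpos.le] at h'
        norm_num at h'
        exact h'
      · right; omega
    have htri : ∀ i j k, A i j * A j k * A k i ≤ 1 := by
      intro i j k
      by_cases hij : i = j
      · subst hij
        have : A i i * A i k * A k i = 1 := by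
          rw [hrec i k, diag_one]; field_simp; exact div_self (hA i k).ne'
        rw [this]
      by_cases hjk : j = k
      · subst hjk
        have : A i j * A j j * A j i = 1 := by
          rw [hrec i j, diag_one]; field_simp; exact div_self (hA i j).ne'
        rw [this]
      by_cases hik : i = k
      · subst hik
        have : A i j * A j i * A i i = 1 := by
          rw [hrec i j, diag_one]; field_simp; exact div_self (hA i j).ne'
        rw [this]
      · have h3n : 3 ≤ n := by
          have hcard : ({i, j, k} : Finset (Fin n)).card = 3 := by
            rw [Finset.card_insert_of_notMem (by simp [hij, hik]),
              Finset.card_insert_of_notMem (by simp [hjk]), Finset.card_singleton]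
          have := Finset.card_le_univ ({i, j, k} : Finset (Fin n))
          simpa [hcard] using this
        rcases htTr3 with h1 | h1
        · calc A i j * A j k * A k i ≤ tPow A 3 i i := triangle_le_tPow3 A hA i j k
            _ ≤ tTr (tPow A 3) := le_ciSup (bddR fun i => tPow A 3 i i) i
            _ ≤ 1 := h1
        · omega
    intro i j k
    have h1 := htri i k j
    have h2 := htri j k i
    rw [hrec i j, mul_one_div, div_le_one (hA i j)] at h1
    rw [hrec k j, hrec i k] at h2
    have h2' : A i j ≤ A i k * A k j := by
      have hkj := hA k j
      have hik := hA i k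
      rw [div_mul_eq_mul_div, one_mul, div_mul_eq_mul_div, one_div_mul_eq_div,
        div_div, div_le_one (by positivity)] at h2
      linarith [h2]
    linarith
  · -- consistent → tRadius = 1
    intro hcons
    have hAA : tMul A A = A := by
      funext i k
      apply le_antisymm
      · apply ciSup_le
        intro j
        rw [← hcons i k j]
      · calc A i k = A i k * A k k := by rw [diag_one, mul_one]
          _ ≤ ⨆ j, A i j * A j k := le_ciSup (bddR fun j => A i j * A j k) k
    have hPow : ∀ m, tPow A (m + 1) = A := by
      intro m
      induction m with
      | zero => exact tPow_one A hA
      | succ m ih =>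
        show tMul A (tPow A (m + 1)) = A
        rw [ih, hAA]
    have hterm : ∀ kk : Fin n,
        tTr (tPow A ((kk:ℕ)+1)) ^ ((1:ℝ)/((kk:ℕ)+1)) = 1 := by
      intro kk
      rw [hPow, tTrA, Real.one_rpow]
    rw [tRadius]
    simp only [hterm]
    exact ciSup_const
end

section
/- Let A = (a_ij) be an n×n matrix with nonnegative real entries whose tropical spectral radius λ = λ(A) is positive. Then the infimum over all positive vectors x ∈ ℝⁿ of the quantity x⁻⊗A⊗x = max_{i,j} a_ij·x_j/x_i equals λ, and the infimum is attained. -/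
section Aux
variable {n : ℕ}

lemma fin_ciSup_eq (hn : 1 ≤ n) (f : Fin n → ℝ) : ∃ k, (⨆ i, f i) = f k := by
  have : Nonempty (Fin n) := ⟨⟨0, hn⟩⟩
  obtain ⟨k, hk⟩ := Finite.exists_max f
  exact ⟨k, le_antisymm (ciSup_le hk) (le_ciSup (Finite.bddAbove_range f) k)⟩

lemma tPow_succ (A : Matrix (Fin n) (Fin n) ℝ) (m : ℕ) (i j : Fin n) :
    tPow A (m + 1) i j = ⨆ k, A i k * tPow A m k j := rfl

lemma tPow_nonneg (A : Matrix (Fin n) (Fin n) ℝ) (hA : ∀ i j, 0 ≤ A i j)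
    (m : ℕ) (i j : Fin n) : 0 ≤ tPow A m i j := by
  induction m generalizing i j with
  | zero => simp only [tPow]; split <;> norm_num
  | succ m ih =>
    exact Real.iSup_nonneg fun k => mul_nonneg (hA i k) (ih k j)

/-- walk weight -/
noncomputable def wt (A : Matrix (Fin n) (Fin n) ℝ) (p : ℕ → Fin n) (m : ℕ) : ℝ :=
  ∏ t ∈ Finset.range m, A (p t) (p (t + 1))

lemma wt_nonneg (A : Matrix (Fin n) (Fin n) ℝ) (hA : ∀ i j, 0 ≤ A i j)
    (p : ℕ → Fin n) (m : ℕ) : 0 ≤ wt A p m :=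
  Finset.prod_nonneg fun t _ => hA _ _

lemma wt_le_tPow (A : Matrix (Fin n) (Fin n) ℝ) (hA : ∀ i j, 0 ≤ A i j)
    (m : ℕ) (p : ℕ → Fin n) : wt A p m ≤ tPow A m (p 0) (p m) := by
  have : Nonempty (Fin n) := ⟨p 0⟩
  induction m generalizing p with
  | zero => simp [wt, tPow]
  | succ m ih =>
    rw [wt, Finset.prod_range_succ', tPow_succ]
    calc (∏ k ∈ Finset.range m, A (p (k+1)) (p (k+1+1))) * A (p 0) (p 1)
        = A (p 0) (p 1) * wt A (fun t => p (t+1)) m := by rw [mul_comm]; rfl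
      _ ≤ A (p 0) (p 1) * tPow A m (p 1) (p (m+1)) := by
          exact mul_le_mul_of_nonneg_left (ih (fun t => p (t+1))) (hA _ _)
      _ ≤ ⨆ k, A (p 0) k * tPow A m k (p (m+1)) :=
          le_ciSup (f := fun k => A (p 0) k * tPow A m k (p (m+1)))
            (Finite.bddAbove_range _) (p 1)

lemma exists_witness_walk (A : Matrix (Fin n) (Fin n) ℝ) (hA : ∀ i j, 0 ≤ A i j)
    (hn : 1 ≤ n) (m : ℕ) (i j : Fin n) (hp : 0 < tPow A m i j) :
    ∃ p : ℕ → Fin n, p 0 = i ∧ p m = j ∧ wt A p m = tPow A m i j := by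
  induction m generalizing i j with
  | zero =>
    by_cases hij : i = j
    · exact ⟨fun _ => i, rfl, hij, by simp [wt, tPow, hij]⟩
    · simp [tPow, hij] at hp
  | succ m ih =>
    rw [tPow_succ] at hp ⊢
    obtain ⟨k, hk⟩ := fin_ciSup_eq hn (fun k => A i k * tPow A m k j)
    rw [hk] at hp ⊢
    have hAik : 0 < A i k := by
      rcases lt_or_eq_of_le (hA i k) with h | h
      · exact h
      · rw [← h, zero_mul] at hp; exact absurd hp (lt_irrefl 0)
    have hPkj : 0 < tPow A m k j := by
      by_contra h
      push_neg at h
      have h0 := le_antisymm h (tPow_nonneg A hA m k j)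
      rw [h0, mul_zero] at hp; exact lt_irrefl _ hp
    obtain ⟨p, hp0, hpm, hw⟩ := ih k j hPkj
    refine ⟨fun t => if t = 0 then i else p (t - 1), by simp, by simp [hpm], ?_⟩
    rw [wt, Finset.prod_range_succ']
    have h1 : ∀ t : ℕ, (if t + 1 = 0 then i else p (t + 1 - 1)) = p t := by
      intro t; simp
    calc (∏ t ∈ Finset.range m,
            A (if t + 1 = 0 then i else p (t+1-1)) (if t + 1 + 1 = 0 then i else p (t+1+1-1)))
          * A (if (0:ℕ) = 0 then i else p (0-1)) (if (0:ℕ)+1 = 0 then i else p (0+1-1))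
        = wt A p m * A i (p 0) := by
          rw [wt]
          have h2 : (∏ t ∈ Finset.range m,
              A (if t + 1 = 0 then i else p (t+1-1)) (if t + 1 + 1 = 0 then i else p (t+1+1-1)))
              = ∏ t ∈ Finset.range m, A (p t) (p (t+1)) := by
            apply Finset.prod_congr rfl
            intro t _
            rw [h1 t, h1 (t+1)]
          rw [h2]
          norm_num
      _ = A i k * tPow A m k j := by rw [hw, hp0, mul_comm]

lemma wt_add (A : Matrix (Fin n) (Fin n) ℝ) (p : ℕ → Fin n) (a b : ℕ) :
    wt A p (a + b) = wt A p a * wt A (fun t => p (a + t)) b := by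
  rw [wt, wt, wt, Finset.prod_range_add]
  congr 1

lemma wt_congr (A : Matrix (Fin n) (Fin n) ℝ) {p p' : ℕ → Fin n}
    (h : ∀ t, p t = p' t) (m : ℕ) : wt A p m = wt A p' m := by
  unfold wt
  apply Finset.prod_congr rfl
  intro t _
  rw [h t, h (t + 1)]

lemma diag_le_tTr (A : Matrix (Fin n) (Fin n) ℝ) (i : Fin n) : A i i ≤ tTr A :=
  le_ciSup (f := fun i => A i i) (Finite.bddAbove_range _) i

lemma tPow_n_le_star (hn : 1 ≤ n) (A : Matrix (Fin n) (Fin n) ℝ) (hA : ∀ i j, 0 ≤ A i j)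
    (Htr : ∀ m, 1 ≤ m → m ≤ n → tTr (tPow A m) ≤ 1) (i j : Fin n) :
    tPow A n i j ≤ ⨆ k : Fin n, tPow A (k : ℕ) i j := by
  have hne : Nonempty (Fin n) := ⟨⟨0, hn⟩⟩
  have hsup0 : (0:ℝ) ≤ ⨆ k : Fin n, tPow A (k : ℕ) i j :=
    Real.iSup_nonneg fun k => tPow_nonneg A hA _ i j
  rcases lt_or_ge 0 (tPow A n i j) with hp | hp
  swap
  · exact hp.trans hsup0
  obtain ⟨p, hp0, hpn, hw⟩ := exists_witness_walk A hA hn n i j hp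
  -- pigeonhole
  obtain ⟨s, t, hst, hpst⟩ := Fintype.exists_ne_map_eq_of_card_lt
    (fun u : Fin (n+1) => p (u : ℕ)) (by simp)
  -- get a < b ≤ n with p a = p b
  obtain ⟨a, b, hab, hbn, hpab⟩ : ∃ a b : ℕ, a < b ∧ b ≤ n ∧ p a = p b := by
    rcases lt_or_gt_of_ne hst with h | h
    · exact ⟨s, t, h, Nat.lt_succ_iff.mp t.isLt, hpst⟩
    · exact ⟨t, s, h, Nat.lt_succ_iff.mp s.isLt, hpst.symm⟩
  set c := b - a with hc
  set d := n - b with hd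
  have hacd : n = a + (c + d) := by omega
  have hbac : b = a + c := by omega
  -- decompose the walk weight
  have hdec : wt A p n = wt A p a * (wt A (fun u => p (a + u)) c * wt A (fun u => p (b + u)) d) := by
    have hstep : wt A p n = wt A p (a + (c + d)) := by rw [← hacd]
    rw [hstep, wt_add, wt_add]
    congr 1
    congr 1
    exact wt_congr A (fun t => by show p (a + (c + t)) = p (b + t); congr 1; omega) d
  -- the middle is a closed walk of length c, weight ≤ 1
  have hmid : wt A (fun u => p (a + u)) c ≤ 1 := by
    have h1 := wt_le_tPow A hA c (fun u => p (a + u))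
    simp only [Nat.add_zero] at h1
    have h2 : p (a + c) = p a := by rw [← hbac, ← hpab]
    rw [h2] at h1
    calc wt A (fun u => p (a + u)) c ≤ tPow A c (p a) (p a) := h1
      _ ≤ tTr (tPow A c) := diag_le_tTr _ _
      _ ≤ 1 := Htr c (by omega) (by omega)
  -- the spliced walk
  set q : ℕ → Fin n := fun u => if u ≤ a then p u else p (u + c) with hq
  have hqwt : wt A q (a + d) = wt A p a * wt A (fun u => p (b + u)) d := by
    rw [wt_add]
    congr 1
    · apply Finset.prod_congr rfl
      intro u hu
      simp only [Finset.mem_range] at hu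
      have e1 : q u = p u := by simp only [hq]; rw [if_pos (by omega)]
      have e2 : q (u + 1) = p (u + 1) := by simp only [hq]; rw [if_pos (by omega)]
      rw [e1, e2]
    · apply Finset.prod_congr rfl
      intro u _
      have e1 : q (a + u) = p (b + u) := by
        simp only [hq]
        rcases Nat.eq_zero_or_pos u with h0 | h0
        · subst h0; rw [if_pos (by omega)]
          simp only [Nat.add_zero]; rw [hpab]
        · rw [if_neg (by omega)]
          congr 1; omega
      have e2 : q (a + (u + 1)) = p (b + (u + 1)) := by
        simp only [hq]
        rw [if_neg (by omega)]
        congr 1; omega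
      show A (q (a + u)) (q (a + (u + 1))) = A (p (b + u)) (p (b + (u + 1)))
      rw [e1, e2]
  -- combine
  have hwle : wt A p n ≤ wt A q (a + d) := by
    rw [hdec, hqwt]
    have hrest : (0:ℝ) ≤ wt A (fun u => p (b + u)) d := wt_nonneg A hA _ _
    have hwa : (0:ℝ) ≤ wt A p a := wt_nonneg A hA _ _
    calc wt A p a * (wt A (fun u => p (a + u)) c * wt A (fun u => p (b + u)) d)
        ≤ wt A p a * (1 * wt A (fun u => p (b + u)) d) := by
          apply mul_le_mul_of_nonneg_left _ hwa
          exact mul_le_mul_of_nonneg_right hmid hrest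
      _ = wt A p a * wt A (fun u => p (b + u)) d := by ring
  have hqend : q 0 = i ∧ q (a + d) = j := by
    constructor
    · simp only [hq]; rw [if_pos (Nat.zero_le a), hp0]
    · simp only [hq]
      by_cases hle : a + d ≤ a
      · rw [if_pos hle]
        have : d = 0 := by omega
        have hbn' : b = n := by omega
        rw [show a + d = a by omega, hpab, hbn', hpn]
      · rw [if_neg hle, show a + d + c = n by omega, hpn]
  have hfinal : wt A q (a + d) ≤ tPow A (a + d) i j := by
    have := wt_le_tPow A hA (a + d) q
    rwa [hqend.1, hqend.2] at this
  have hlt : a + d < n := by omega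
  calc tPow A n i j = wt A p n := hw.symm
    _ ≤ wt A q (a + d) := hwle
    _ ≤ tPow A (a + d) i j := hfinal
    _ ≤ ⨆ k : Fin n, tPow A (k : ℕ) i j :=
        le_ciSup (f := fun k : Fin n => tPow A (k : ℕ) i j) (Finite.bddAbove_range _) ⟨a + d, hlt⟩

lemma exists_subinvariant (hn : 1 ≤ n) (A : Matrix (Fin n) (Fin n) ℝ) (hA : ∀ i j, 0 ≤ A i j)
    (Htr : ∀ m, 1 ≤ m → m ≤ n → tTr (tPow A m) ≤ 1) :
    ∃ x : Fin n → ℝ, (∀ i, 0 < x i) ∧ ∀ i j, A i j * x j ≤ x i := by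
  have hne : Nonempty (Fin n) := ⟨⟨0, hn⟩⟩
  set x : Fin n → ℝ := fun i => ⨆ k : Fin n, ⨆ j, tPow A (k : ℕ) i j with hxdef
  have hxle : ∀ (k : Fin n) (i j : Fin n), tPow A (k : ℕ) i j ≤ x i := by
    intro k i j
    calc tPow A (k : ℕ) i j ≤ ⨆ j', tPow A (k : ℕ) i j' :=
          le_ciSup (f := fun j' => tPow A (k : ℕ) i j') (Finite.bddAbove_range _) j
      _ ≤ x i := le_ciSup (f := fun k' : Fin n => ⨆ j', tPow A (k' : ℕ) i j')
          (Finite.bddAbove_range _) k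
  have hxpos : ∀ i, 0 < x i := by
    intro i
    have h1 : (1 : ℝ) = tPow A ((⟨0, hn⟩ : Fin n) : ℕ) i i := by simp [tPow]
    calc (0:ℝ) < 1 := one_pos
      _ ≤ x i := by rw [h1]; exact hxle ⟨0, hn⟩ i i
  refine ⟨x, hxpos, ?_⟩
  intro i j
  have hterm : ∀ (k : Fin n) (j' : Fin n), A i j * tPow A (k : ℕ) j j' ≤ x i := by
    intro k j'
    have h1 : A i j * tPow A (k : ℕ) j j' ≤ tPow A ((k : ℕ) + 1) i j' := by
      rw [tPow_succ]
      exact le_ciSup (f := fun m => A i m * tPow A (k : ℕ) m j' ) (Finite.bddAbove_range _) j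
    rcases lt_or_ge ((k : ℕ) + 1) n with hk | hk
    · exact h1.trans (hxle ⟨(k : ℕ) + 1, hk⟩ i j')
    · have hkn : (k : ℕ) + 1 = n := by omega
      rw [hkn] at h1
      refine h1.trans ?_
      refine (tPow_n_le_star hn A hA Htr i j').trans ?_
      exact ciSup_le fun k' => hxle k' i j'
  calc A i j * x j = ⨆ k : Fin n, A i j * ⨆ j', tPow A (k : ℕ) j j' := by
        rw [hxdef]; exact Real.mul_iSup_of_nonneg (hA i j) _
    _ ≤ x i := by
        refine ciSup_le fun k => ?_
        rw [Real.mul_iSup_of_nonneg (hA i j)]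
        exact ciSup_le fun j' => hterm k j'

lemma tPow_div (A : Matrix (Fin n) (Fin n) ℝ) (L : ℝ) (hL : 0 < L) (m : ℕ) (i j : Fin n) :
    tPow (fun i j => A i j / L) m i j = tPow A m i j / L ^ m := by
  induction m generalizing i j with
  | zero =>
    show (if i = j then (1:ℝ) else 0) = (if i = j then (1:ℝ) else 0) / L ^ 0
    simp
  | succ m ih =>
    rw [tPow_succ]
    show (⨆ k, A i k / L * tPow (fun i j => A i j / L) m k j) = _
    have hterm : ∀ k, A i k / L * tPow (fun i j => A i j / L) m k j
        = (A i k * tPow A m k j) * (L ^ (m + 1))⁻¹ := by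
      intro k
      rw [ih, div_mul_div_comm, div_eq_mul_inv, pow_succ]
      ring
    simp only [hterm]
    rw [← Real.iSup_mul_of_nonneg (by positivity), div_eq_mul_inv]

lemma tTr_div (hn : 1 ≤ n) (A : Matrix (Fin n) (Fin n) ℝ) (L : ℝ) (hL : 0 < L) (m : ℕ) :
    tTr (tPow (fun i j => A i j / L) m) = tTr (tPow A m) / L ^ m := by
  have hne : Nonempty (Fin n) := ⟨⟨0, hn⟩⟩
  unfold tTr
  have h : ∀ i : Fin n, tPow (fun i j => A i j / L) m i i = tPow A m i i * (L ^ m)⁻¹ :=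
    fun i => by rw [tPow_div A L hL, div_eq_mul_inv]
  simp only [h]
  rw [← Real.iSup_mul_of_nonneg (by positivity), div_eq_mul_inv]

lemma pow_rpow_inv_natCast' (v : ℝ) (hv : 0 ≤ v) (m : ℕ) :
    (v ^ (m + 1)) ^ ((1 : ℝ) / ((m : ℕ) + 1)) = v := by
  rw [← Real.rpow_natCast v (m + 1), ← Real.rpow_mul hv]
  push_cast
  rw [mul_one_div, div_self (by positivity), Real.rpow_one]

lemma tTr_tPow_nonneg (hn : 1 ≤ n) (A : Matrix (Fin n) (Fin n) ℝ) (hA : ∀ i j, 0 ≤ A i j)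
    (m : ℕ) : 0 ≤ tTr (tPow A m) := by
  have hne : Nonempty (Fin n) := ⟨⟨0, hn⟩⟩
  exact Real.iSup_nonneg fun i => tPow_nonneg A hA m i i

lemma tTr_le_pow_radius (hn : 1 ≤ n) (A : Matrix (Fin n) (Fin n) ℝ) (hA : ∀ i j, 0 ≤ A i j)
    (m : ℕ) (hm1 : 1 ≤ m) (hmn : m ≤ n) : tTr (tPow A m) ≤ (tRadius A) ^ m := by
  have hne : Nonempty (Fin n) := ⟨⟨0, hn⟩⟩
  have h0 : 0 ≤ tTr (tPow A m) := tTr_tPow_nonneg hn A hA m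
  set k : Fin n := ⟨m - 1, by omega⟩ with hk
  have hkm : (k : ℕ) + 1 = m := by simp [hk]; omega
  have h1 : (tTr (tPow A ((k : ℕ) + 1))) ^ ((1 : ℝ) / ((k : ℕ) + 1)) ≤ tRadius A :=
    le_ciSup (f := fun k : Fin n => (tTr (tPow A ((k : ℕ) + 1))) ^ ((1 : ℝ) / ((k : ℕ) + 1)))
      (Finite.bddAbove_range _) k
  have h2 : (tTr (tPow A m)) ^ ((1 : ℝ) / ((m : ℕ))) ≤ tRadius A := by
    rw [← hkm]
    push_cast
    exact h1
  have h3 : tTr (tPow A m) = ((tTr (tPow A m)) ^ ((1 : ℝ) / m)) ^ m := by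
    rw [← Real.rpow_natCast ((tTr (tPow A m)) ^ ((1 : ℝ) / m)) m, ← Real.rpow_mul h0,
      one_div, inv_mul_cancel₀ (by positivity : ((m : ℝ)) ≠ 0), Real.rpow_one]
  rw [h3]
  exact pow_le_pow_left₀ (Real.rpow_nonneg h0 _) h2 m

lemma radius_le (hn : 1 ≤ n) (A : Matrix (Fin n) (Fin n) ℝ) (hA : ∀ i j, 0 ≤ A i j)
    (x : Fin n → ℝ) (hx : ∀ i, 0 < x i) :
    tRadius A ≤ ⨆ i, ⨆ j, A i j * x j / x i := by
  have hne : Nonempty (Fin n) := ⟨⟨0, hn⟩⟩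
  set v := ⨆ i, ⨆ j, A i j * x j / x i with hv
  have hv0 : 0 ≤ v :=
    Real.iSup_nonneg fun i => Real.iSup_nonneg fun j =>
      div_nonneg (mul_nonneg (hA i j) (hx j).le) (hx i).le
  have hAx : ∀ i k, A i k * x k ≤ v * x i := by
    intro i k
    have h1 : A i k * x k / x i ≤ v := by
      calc A i k * x k / x i ≤ ⨆ j, A i j * x j / x i :=
            le_ciSup (f := fun j => A i j * x j / x i) (Finite.bddAbove_range _) k
        _ ≤ v := le_ciSup (f := fun i => ⨆ j, A i j * x j / x i) (Finite.bddAbove_range _) i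
    calc A i k * x k = (A i k * x k / x i) * x i := by
          rw [div_mul_cancel₀ _ (hx i).ne']
      _ ≤ v * x i := mul_le_mul_of_nonneg_right h1 (hx i).le
  have key : ∀ m (i j : Fin n), tPow A m i j * x j ≤ v ^ m * x i := by
    intro m
    induction m with
    | zero =>
      intro i j
      by_cases hij : i = j
      · subst hij; simp [tPow]
      · simp [tPow, hij]
        exact (hx i).le
    | succ m ih =>
      intro i j
      rw [tPow_succ, Real.iSup_mul_of_nonneg (hx j).le]
      refine ciSup_le fun k => ?_
      calc A i k * tPow A m k j * x j = A i k * (tPow A m k j * x j) := by ring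
        _ ≤ A i k * (v ^ m * x k) := mul_le_mul_of_nonneg_left (ih k j) (hA i k)
        _ = v ^ m * (A i k * x k) := by ring
        _ ≤ v ^ m * (v * x i) := mul_le_mul_of_nonneg_left (hAx i k) (pow_nonneg hv0 m)
        _ = v ^ (m + 1) * x i := by ring
  refine ciSup_le fun k => ?_
  have h0 : 0 ≤ tTr (tPow A ((k : ℕ) + 1)) := tTr_tPow_nonneg hn A hA _
  have h1 : tTr (tPow A ((k : ℕ) + 1)) ≤ v ^ ((k : ℕ) + 1) := by
    refine ciSup_le fun i => ?_
    have := key ((k : ℕ) + 1) i i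
    exact le_of_mul_le_mul_right this (hx i)
  calc (tTr (tPow A ((k : ℕ) + 1))) ^ ((1 : ℝ) / ((k : ℕ) + 1))
      ≤ (v ^ ((k : ℕ) + 1)) ^ ((1 : ℝ) / ((k : ℕ) + 1)) :=
        Real.rpow_le_rpow h0 h1 (by positivity)
    _ = v := pow_rpow_inv_natCast' v hv0 (k : ℕ)

end Aux


/-- For a nonnegative matrix `A` with positive tropical spectral radius
`λ = λ(A)`, the infimum over positive vectors `x` of
`x⁻ ⊗ A ⊗ x = max_{i,j} a_ij · x_j / x_i` equals `λ` and is attained. -/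
theorem min_xAx_eq_tRadius (n : ℕ) (hn : 1 ≤ n)
    (A : Matrix (Fin n) (Fin n) ℝ) (hA : ∀ i j, 0 ≤ A i j)
    (hpos : 0 < tRadius A) :
    IsLeast {v : ℝ | ∃ x : Fin n → ℝ, (∀ i, 0 < x i) ∧
        v = ⨆ i, ⨆ j, A i j * x j / x i}
      (tRadius A) := by
  have hne : Nonempty (Fin n) := ⟨⟨0, hn⟩⟩
  set L := tRadius A with hL
  constructor
  · -- membership: construct the optimal x
    set B : Matrix (Fin n) (Fin n) ℝ := fun i j => A i j / L with hB
    have hBnn : ∀ i j, 0 ≤ B i j := fun i j => div_nonneg (hA i j) hpos.le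
    have HtrB : ∀ m, 1 ≤ m → m ≤ n → tTr (tPow B m) ≤ 1 := by
      intro m hm1 hmn
      rw [hB, tTr_div hn A L hpos m, div_le_one (by positivity)]
      exact tTr_le_pow_radius hn A hA m hm1 hmn
    obtain ⟨x, hxpos, hxinv⟩ := exists_subinvariant hn B hBnn HtrB
    refine ⟨x, hxpos, ?_⟩
    have hub : (⨆ i, ⨆ j, A i j * x j / x i) ≤ L := by
      refine ciSup_le fun i => ciSup_le fun j => ?_
      rw [div_le_iff₀ (hxpos i)]
      have := hxinv i j
      rw [hB] at this
      have h2 : A i j / L * x j ≤ x i := this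
      calc A i j * x j = L * (A i j / L * x j) := by field_simp
        _ ≤ L * x i := mul_le_mul_of_nonneg_left h2 hpos.le
    have hlb : L ≤ ⨆ i, ⨆ j, A i j * x j / x i := radius_le hn A hA x hxpos
    linarith
  · -- lower bound
    rintro v ⟨x, hxpos, rfl⟩
    exact radius_le hn A hA x hxpos
end
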